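/- arXiv:1912.10034 — 7 statements merged into one kernel-verified Lean document; each statement's English description precedes it below -/
import Mathlib

section
/- Let n, d ≥ 1, let D be an n×d complex matrix and let C be an n×n complex matrix, and let B = Dᴴ C D. If the real d×d matrix Re B (entrywise real part of B) is invertible, then d ≤ 2n. -/
open Matrix Complex

/-- If the entrywise real part of `B = Dᴴ C D` is invertible, with `D` an
`n × d` complex matrix, then `d ≤ 2n`. -/
theorem stmt_3 (n d : ℕ) (hn : 1 ≤ n) (hd : 1 ≤ d)
    (D : Matrix (Fin n) (Fin d) ℂ) (C : Matrix (Fin n) (Fin n) ℂ)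
    (B : Matrix (Fin d) (Fin d) ℂ) (hB : B = Dᴴ * C * D)
    (h : IsUnit (Matrix.of fun i j => (B i j).re)) : d ≤ 2 * n := by
  -- The real-linear map ℝ^d → ℂ^n, x ↦ D *ᵥ (x : ℂ^d)
  set f : (Fin d → ℝ) →ₗ[ℝ] (Fin n → ℂ) :=
    (D.mulVecLin.restrictScalars ℝ).comp (LinearMap.compLeft Complex.ofRealAm.toLinearMap (Fin d)) with hf
  have hReB : Function.Injective ((Matrix.of fun i j => (B i j).re).mulVec) :=
    Matrix.mulVec_injective_iff_isUnit.mpr h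
  have hinj : Function.Injective f := by
    rw [← LinearMap.ker_eq_bot, LinearMap.ker_eq_bot']
    intro x hx
    have hDx : D *ᵥ (fun j => (x j : ℂ)) = 0 := by exact hx
    have hBx : B *ᵥ (fun j => (x j : ℂ)) = 0 := by
      rw [hB, ← Matrix.mulVec_mulVec, ← Matrix.mulVec_mulVec, hDx,
        Matrix.mulVec_zero, Matrix.mulVec_zero]
    have hzero : (Matrix.of fun i j => (B i j).re) *ᵥ x = 0 := by
      funext i
      have hi : (B *ᵥ (fun j => (x j : ℂ))) i = 0 := congrFun hBx i
      simp only [Matrix.mulVec, dotProduct, Matrix.of_apply] at hi ⊢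
      calc ∑ j, (B i j).re * x j = (∑ j, B i j * (x j : ℂ)).re := by
            rw [Complex.re_sum]
            exact Finset.sum_congr rfl fun j _ => by
              simp [Complex.mul_re]
        _ = 0 := by rw [hi]; simp
    have := hReB (a₁ := x) (a₂ := 0) (by simpa using hzero)
    simpa using this
  have hle := LinearMap.finrank_le_finrank_of_injective hinj
  have h1 : Module.finrank ℝ (Fin d → ℝ) = d := by simp
  have h2 : Module.finrank ℝ (Fin n → ℂ) = 2 * n := by
    simp [Module.finrank_pi_fintype, Complex.finrank_real_complex, Nat.mul_comm]
  omega
end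

section
/- Let n, d ≥ 1, let A₁,…,A_d be Hermitian n×n complex matrices and let V ∈ ℂⁿ. Then the following are equivalent: (1) there exist c = (c₁,…,c_d) ∈ ℝᵈ with c ≠ 0 and a map g : ℂ → ℂⁿ holomorphic on the open unit disc Δ, continuous on the closed unit disc, such that g(ζ) = (conj(ζ) − 1)·(∑_{j=1}^d c_j · conj(A_jV)) for every ζ with |ζ| = 1; (2) the vectors A₁V, …, A_dV are linearly dependent over ℝ in ℂⁿ. -/
open Complex Matrix Metric

/-- Lemma 2.3: the boundary map `ζ ↦ (conj ζ − 1)·∑ cⱼ conj(AⱼV)` extends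
holomorphically to the disc for some `c ∈ ℝᵈ \ {0}` if and only if the
vectors `A₁V,…,A_dV` are ℝ-linearly dependent. -/
theorem stmt_7 (n d : ℕ) (hn : 1 ≤ n) (hd : 1 ≤ d)
    (A : Fin d → Matrix (Fin n) (Fin n) ℂ) (hA : ∀ j, (A j).IsHermitian)
    (V : Fin n → ℂ) :
    (∃ c : Fin d → ℝ, c ≠ 0 ∧ ∃ g : ℂ → (Fin n → ℂ),
        DifferentiableOn ℂ g (ball (0 : ℂ) 1) ∧
        ContinuousOn g (closedBall (0 : ℂ) 1) ∧
        ∀ ζ : ℂ, ‖ζ‖ = 1 →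
          g ζ = (starRingEnd ℂ ζ - 1) •
            ∑ j, (c j : ℂ) • star ((A j).mulVec V)) ↔
      ¬ LinearIndependent ℝ (fun j => (A j).mulVec V) := by
  rw [Fintype.not_linearIndependent_iff]
  constructor
  · rintro ⟨c, hc, g, hgd, hgc, hgb⟩
    set W : Fin n → ℂ := ∑ j, (c j : ℂ) • star ((A j).mulVec V) with hW
    -- show W = 0 via maximum principle
    have hWe : W = 0 := by
      have h1 : DiffContOnCl ℂ (fun ζ : ℂ => ζ • g ζ) (ball (0:ℂ) 1) := by
        constructor
        · exact (differentiableOn_id).smul hgd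
        · rw [closure_ball (0:ℂ) one_ne_zero]
          exact (continuousOn_id).smul hgc
      have h2 : DiffContOnCl ℂ (fun ζ : ℂ => (1 - ζ) • W) (ball (0:ℂ) 1) :=
        ((differentiable_const (1:ℂ)).sub differentiable_id).diffContOnCl.smul_const W
      have heq : Set.EqOn (fun ζ : ℂ => ζ • g ζ) (fun ζ : ℂ => (1 - ζ) • W)
          (frontier (ball (0:ℂ) 1)) := by
        intro ζ hζ
        rw [frontier_ball (0:ℂ) one_ne_zero] at hζ
        have habs : ‖ζ‖ = 1 := by
          simpa using mem_sphere_zero_iff_norm.mp hζ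
        have := hgb ζ habs
        have h1 : ζ * starRingEnd ℂ ζ = 1 := by
          rw [Complex.mul_conj]
          norm_cast
          rw [Complex.normSq_eq_norm_sq, habs]; norm_num
        simp only [this, smul_smul, mul_sub, mul_one, h1]
      have h0 := Complex.eqOn_of_eqOn_frontier isBounded_ball h1 h2 heq
        (mem_ball_self one_pos)
      simpa using h0.symm
    refine ⟨c, ?_, ?_⟩
    · have := congrArg (star : (Fin n → ℂ) → _) hWe
      rw [hW, star_sum, star_zero] at this
      have h2 : ∑ j, (c j) • (A j).mulVec V = 0 := by
        rw [← this]
        refine Finset.sum_congr rfl fun j _ => ?_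
        rw [star_smul, star_star, Complex.star_def, Complex.conj_ofReal,
          Complex.coe_smul]
      exact h2
    · obtain ⟨i, hi⟩ := Function.ne_iff.mp hc
      exact ⟨i, hi⟩
  · rintro ⟨c, hsum, i, hi⟩
    refine ⟨c, Function.ne_iff.mpr ⟨i, hi⟩, 0, differentiableOn_const 0,
      continuousOn_const, fun ζ hζ => ?_⟩
    have h0 : ∑ j, (c j : ℂ) • star ((A j).mulVec V) = 0 := by
      have := congrArg (star : (Fin n → ℂ) → _) hsum
      rw [star_sum, star_zero] at this
      rw [← this]
      refine Finset.sum_congr rfl fun j _ => ?_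
      rw [star_smul, star_trivial (c j), Complex.coe_smul]
    rw [h0, smul_zero]
    rfl
end

section
/- Let u : ℂ → ℂ be holomorphic on the open unit disc Δ and continuous on the closed unit disc, and suppose u(ζ) = ζ·conj(u(ζ)) for every ζ with |ζ| = 1. Then there exists a ∈ ℂ such that u(ζ) = a + conj(a)·ζ for every ζ in the closed unit disc. -/
open Complex Metric Real intervalIntegral

/-- Scalar Riemann–Hilbert fact: a holomorphic function on the disc,
continuous up to the boundary, with `u(ζ) = ζ·conj(u(ζ))` on the unit circle
is of the form `a + conj(a)·ζ`. -/
theorem stmt_10 (u : ℂ → ℂ)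
    (hu : DifferentiableOn ℂ u (ball (0 : ℂ) 1))
    (hc : ContinuousOn u (closedBall (0 : ℂ) 1))
    (hb : ∀ ζ : ℂ, ‖ζ‖ = 1 → u ζ = ζ * starRingEnd ℂ (u ζ)) :
    ∃ a : ℂ, ∀ ζ ∈ closedBall (0 : ℂ) 1, u ζ = a + starRingEnd ℂ a * ζ := by
  set a : ℂ := u 0 with ha
  set w : ℂ → ℂ := fun z => u z - a - starRingEnd ℂ a * z with hw
  have hw0 : w 0 = 0 := by simp [hw, ha]
  have hwd : DifferentiableOn ℂ w (ball (0 : ℂ) 1) := by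
    apply (hu.sub (differentiableOn_const a)).sub
    exact (differentiable_id.const_mul _).differentiableOn
  have hwc : ContinuousOn w (closedBall (0 : ℂ) 1) := by
    apply (hc.sub continuousOn_const).sub
    exact (continuous_const.mul continuous_id).continuousOn
  have hwb : ∀ ζ : ℂ, ‖ζ‖ = 1 → w ζ = ζ * starRingEnd ℂ (w ζ) := by
    intro ζ hζ
    have h1 : ζ * starRingEnd ℂ ζ = 1 := by
      rw [Complex.mul_conj]; norm_cast; rw [Complex.normSq_eq_norm_sq, hζ]; norm_num
    simp only [hw, map_sub, map_mul, RingHomCompTriple.comp_apply, RingHom.id_apply,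
      Complex.conj_conj]
    linear_combination hb ζ hζ + a * h1
  -- the function g = w z / z (extended by the derivative at 0)
  set g : ℂ → ℂ := dslope w 0 with hg
  have hgd : DifferentiableOn ℂ g (ball (0 : ℂ) 1) :=
    (Complex.differentiableOn_dslope (ball_mem_nhds 0 one_pos)).2 hwd
  have hgc : ContinuousOn g (closedBall (0 : ℂ) 1) := by
    intro x hx
    rcases eq_or_ne x 0 with rfl | hx0
    · exact ((continuousAt_dslope_same.2
        (hwd.differentiableAt (isOpen_ball.mem_nhds (by simp)))).continuousWithinAt)
    · exact (continuousWithinAt_dslope_of_ne hx0).2 (hwc x hx)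
  have hgeq : ∀ z : ℂ, z ≠ 0 → g z = w z / z := by
    intro z hz
    rw [hg, dslope_of_ne _ hz, slope_def_field, hw0]
    simp [div_eq_mul_inv]
  -- F z = z * (g z)^2; on the circle F = |w|^2
  set F : ℂ → ℂ := fun z => z * (g z) ^ 2 with hF
  have hFd : DiffContOnCl ℂ F (ball (0 : ℂ) 1) := by
    constructor
    · exact (differentiableOn_id).mul ((hgd.pow 2))
    · rw [closure_ball (0:ℂ) one_ne_zero]
      exact (continuousOn_id).mul (hgc.pow 2)
  have hF0 : F 0 = 0 := by simp [hF]
  have hFb : ∀ ζ : ℂ, ‖ζ‖ = 1 → F ζ = (Complex.normSq (w ζ) : ℂ) := by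
    intro ζ hζ
    have hζ0 : ζ ≠ 0 := by intro h; rw [h] at hζ; simp at hζ
    rw [hF]
    simp only
    rw [hgeq ζ hζ0, div_pow, ← Complex.mul_conj]
    field_simp
    linear_combination (w ζ) * (hwb ζ hζ)
  -- Cauchy integral formula at 0
  have hcauchy : (∮ z in C(0, 1), (z - 0)⁻¹ • F z) = (2 * π * I : ℂ) • F 0 :=
    hFd.circleIntegral_sub_inv_smul (by simp)
  have hint : (∫ t in (0:ℝ)..2 * π, F (circleMap 0 1 t)) = 0 := by
    have : (∮ z in C(0, 1), (z - 0)⁻¹ • F z)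
        = ∫ t in (0:ℝ)..2 * π, I * F (circleMap 0 1 t) := by
      rw [circleIntegral]
      congr 1; ext t
      have hne : circleMap 0 1 t ≠ 0 := circleMap_ne_center one_ne_zero
      rw [deriv_circleMap]
      simp only [smul_eq_mul, sub_zero]
      field_simp
    rw [this, hF0, smul_zero, intervalIntegral.integral_const_mul] at hcauchy
    simpa [Complex.I_ne_zero] using hcauchy
  -- the real integrand
  set fr : ℝ → ℝ := fun t => Complex.normSq (w (circleMap 0 1 t)) with hfr
  have hfrc : Continuous fr := by
    apply Complex.continuous_normSq.comp
    apply hwc.comp_continuous (continuous_circleMap 0 1)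
    intro t
    simp [mem_closedBall, norm_circleMap_zero]
  have hfrint : (∫ t in (0:ℝ)..2 * π, fr t) = 0 := by
    have heq : ∀ t : ℝ, F (circleMap 0 1 t) = (fr t : ℂ) := fun t =>
      hFb _ (by simp [norm_circleMap_zero])
    have : (∫ t in (0:ℝ)..2 * π, F (circleMap 0 1 t))
        = ((∫ t in (0:ℝ)..2 * π, fr t : ℝ) : ℂ) := by
      rw [← intervalIntegral.integral_ofReal]
      exact intervalIntegral.integral_congr fun t _ => heq t
    rw [this] at hint
    exact_mod_cast hint
  -- hence w vanishes on the circle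
  have hwzero : ∀ ζ : ℂ, ‖ζ‖ = 1 → w ζ = 0 := by
    intro ζ hζ
    by_contra hne
    -- find t ∈ [0, 2π] with circleMap t = ζ
    obtain ⟨t, ht, hteq⟩ : ∃ t ∈ Set.Icc (0:ℝ) (2 * π), circleMap 0 1 t = ζ := by
      refine ⟨if 0 ≤ ζ.arg then ζ.arg else ζ.arg + 2 * π, ?_, ?_⟩
      · have h1 := Complex.arg_le_pi ζ
        have h2 := Complex.neg_pi_lt_arg ζ
        have hπ := Real.pi_pos
        split_ifs with h <;> constructor <;> nlinarith
      · have : circleMap 0 1 ζ.arg = ζ := by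
          rw [circleMap]
          simpa [hζ] using Complex.norm_mul_exp_arg_mul_I ζ
        split_ifs with h
        · exact this
        · rw [periodic_circleMap 0 1 ζ.arg]; exact this
    have hpos : 0 < ∫ t in (0:ℝ)..2 * π, fr t := by
      apply intervalIntegral.integral_pos (by positivity) hfrc.continuousOn
      · intro x _; exact Complex.normSq_nonneg _
      · exact ⟨t, ht, by rw [hfr]; simp only; rw [hteq]; exact Complex.normSq_pos.2 hne⟩
    rw [hfrint] at hpos; exact lt_irrefl 0 hpos
  -- maximum modulus: w ≡ 0 on the closed ball
  have hwall : ∀ ζ ∈ closedBall (0:ℂ) 1, w ζ = 0 := by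
    intro ζ hζ
    have hWd : DiffContOnCl ℂ w (ball (0:ℂ) 1) :=
      ⟨hwd, by rw [closure_ball (0:ℂ) one_ne_zero]; exact hwc⟩
    have := Complex.norm_le_of_forall_mem_frontier_norm_le (isBounded_ball) hWd
      (C := 0) (fun z hz => by
        rw [frontier_ball (0:ℂ) one_ne_zero] at hz
        have : ‖z‖ = 1 := by simpa [Complex.norm_def] using hz
        simp [hwzero z this])
      (z := ζ) (by rwa [closure_ball (0:ℂ) one_ne_zero])
    have h0 : ‖w ζ‖ = 0 :=
      le_antisymm (by simpa using this) (norm_nonneg _)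
    exact norm_eq_zero.1 h0
  refine ⟨a, fun ζ hζ => ?_⟩
  have := hwall ζ hζ
  simp only [hw] at this
  linear_combination this
end

section
/- Let g : ℂ → ℂ be holomorphic on the open unit disc Δ and continuous on the closed unit disc, and suppose conj(ζ)·g(ζ) is a real number for every ζ with |ζ| = 1. Then there exist a ∈ ℂ and b ∈ ℝ such that g(ζ) = a + b·ζ + conj(a)·ζ² for every ζ in the closed unit disc. -/
open Complex Metric

/-- If `g` is holomorphic on the disc, continuous up to the boundary, and
`conj(ζ)·g(ζ)` is real on the unit circle, then
`g(ζ) = a + b·ζ + conj(a)·ζ²` with `b` real. -/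
theorem stmt_11 (g : ℂ → ℂ)
    (hg : DifferentiableOn ℂ g (ball (0 : ℂ) 1))
    (hc : ContinuousOn g (closedBall (0 : ℂ) 1))
    (hb : ∀ ζ : ℂ, ‖ζ‖ = 1 → ∃ r : ℝ, starRingEnd ℂ ζ * g ζ = r) :
    ∃ (a : ℂ) (b : ℝ), ∀ ζ ∈ closedBall (0 : ℂ) 1,
      g ζ = a + b * ζ + starRingEnd ℂ a * ζ ^ 2 := by
  set a : ℂ := g 0 with ha
  set q : ℂ → ℂ := fun ζ => g ζ - a - starRingEnd ℂ a * ζ ^ 2 with hqdef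
  have hq0 : q 0 = 0 := by simp [hqdef, ha]
  have hqd : DifferentiableOn ℂ q (ball (0 : ℂ) 1) := by
    apply ((hg.sub (differentiableOn_const a)).sub _)
    exact (differentiableOn_const _).mul (differentiableOn_pow 2)
  have hqc : ContinuousOn q (closedBall (0 : ℂ) 1) := by
    apply (hc.sub continuousOn_const).sub
    exact continuousOn_const.mul (continuousOn_pow 2)
  set h : ℂ → ℂ := dslope q 0 with hhdef
  have hball : ball (0 : ℂ) 1 ∈ nhds (0 : ℂ) := ball_mem_nhds 0 one_pos
  have hhd : DifferentiableOn ℂ h (ball (0 : ℂ) 1) :=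
    (differentiableOn_dslope hball).mpr hqd
  have hne : ∀ ζ : ℂ, ζ ≠ 0 → h ζ = ζ⁻¹ * q ζ := by
    intro ζ hζ
    simp [hhdef, dslope, Function.update_of_ne hζ, slope, hq0, smul_eq_mul]
  have hhc : ContinuousOn h (closedBall (0 : ℂ) 1) := by
    intro ζ hζ
    rcases eq_or_ne ζ 0 with rfl | hζ0
    · exact ((hhd.differentiableAt hball).continuousAt).continuousWithinAt
    · have h1 : ContinuousWithinAt (fun w : ℂ => w⁻¹ * q w) (closedBall (0:ℂ) 1) ζ :=
        (continuousWithinAt_id.inv₀ hζ0).mul (hqc ζ hζ)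
      refine h1.congr_of_eventuallyEq ?_ (hne ζ hζ0)
      filter_upwards [(isOpen_ne.eventually_mem hζ0).filter_mono nhdsWithin_le_nhds] with w hw
      exact hne w hw
  -- boundary: h is real on the unit sphere
  have hreal : ∀ ζ : ℂ, ‖ζ‖ = 1 → (h ζ).im = 0 := by
    intro ζ hζ
    have hζ0 : ζ ≠ 0 := by
      intro e; rw [e] at hζ; simp at hζ
    obtain ⟨r, hr⟩ := hb ζ hζ
    have hconj : starRingEnd ℂ ζ * ζ = 1 := by
      rw [mul_comm, Complex.mul_conj, Complex.normSq_eq_norm_sq, hζ]; norm_num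
    have hinv : ζ⁻¹ = starRingEnd ℂ ζ :=
      inv_eq_of_mul_eq_one_right (by rw [mul_comm]; exact hconj)
    have h2 : starRingEnd ℂ ζ * ζ ^ 2 = ζ := by
      rw [sq, ← mul_assoc, hconj, one_mul]
    have : h ζ = (r : ℂ) - (starRingEnd ℂ ζ * a + starRingEnd ℂ a * ζ) := by
      rw [hne ζ hζ0, hinv]
      simp only [hqdef]
      linear_combination hr - starRingEnd ℂ a * h2
    rw [this]
    have : starRingEnd ℂ ζ * a = starRingEnd ℂ (starRingEnd ℂ a * ζ) := by
      rw [map_mul]; simp [mul_comm]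
    rw [this]
    simp [Complex.sub_im, Complex.add_im]
    ring
  -- max modulus: im h = 0 on closed ball
  have hfr : frontier (ball (0:ℂ) 1) = sphere (0:ℂ) 1 := frontier_ball 0 one_ne_zero
  have hclos : closure (ball (0:ℂ) 1) = closedBall (0:ℂ) 1 := closure_ball 0 one_ne_zero
  have him : ∀ z ∈ closedBall (0:ℂ) 1, (h z).im = 0 := by
    have key : ∀ s : ℝ, s = 1 ∨ s = -1 → ∀ z ∈ closedBall (0:ℂ) 1,
        ‖Complex.exp (s * I * h z)‖ ≤ 1 := by
      intro s hs z hz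
      have hd : DiffContOnCl ℂ (fun w => Complex.exp ((s:ℂ) * I * h w)) (ball (0:ℂ) 1) := by
        refine ⟨?_, ?_⟩
        · exact (hhd.const_mul _).cexp
        · rw [hclos]
          exact Complex.continuous_exp.comp_continuousOn (continuousOn_const.mul hhc)
      refine Complex.norm_le_of_forall_mem_frontier_norm_le isBounded_ball hd ?_ (hclos ▸ hz)
      intro w hw
      rw [hfr, mem_sphere_zero_iff_norm] at hw
      have : (h w).im = 0 := hreal w hw
      rw [Complex.norm_exp]
      have : ((s:ℂ) * I * h w).re = 0 := by
        simp [Complex.mul_re, Complex.mul_im, this]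
      rw [this, Real.exp_zero]
    intro z hz
    have h1 := key 1 (Or.inl rfl) z hz
    have h2 := key (-1) (Or.inr rfl) z hz
    rw [Complex.norm_exp, Real.exp_le_one_iff] at h1 h2
    have e1 : ((1:ℝ) * I * h z).re = -(h z).im := by
      simp [Complex.mul_re, Complex.mul_im]
    have e2 : ((-1:ℝ) * I * h z).re = (h z).im := by
      push_cast
      simp [Complex.mul_re, Complex.mul_im]
    rw [e1] at h1; rw [e2] at h2
    linarith
  -- open mapping: h is constant on the ball
  have hconst : ∃ c : ℂ, ∀ z ∈ ball (0:ℂ) 1, h z = c := by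
    have han : AnalyticOnNhd ℂ h (ball (0:ℂ) 1) := hhd.analyticOnNhd isOpen_ball
    rcases han.is_constant_or_isOpen (convex_ball _ _).isPreconnected with hcase | hcase
    · exact hcase
    · exfalso
      have hopen : IsOpen (h '' ball (0:ℂ) 1) := hcase _ subset_rfl isOpen_ball
      have hmem : h 0 ∈ h '' ball (0:ℂ) 1 := ⟨0, by simp, rfl⟩
      obtain ⟨ε, hε, hball'⟩ := Metric.isOpen_iff.mp hopen _ hmem
      have : h 0 + (ε/2) * I ∈ h '' ball (0:ℂ) 1 := by
        apply hball'
        simp [Complex.dist_eq]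
        rw [abs_of_pos hε]
        linarith
      obtain ⟨w, hw, hweq⟩ := this
      have := him w (ball_subset_closedBall hw)
      rw [hweq] at this
      simp [Complex.add_im, him 0 (by simp)] at this
      linarith
  obtain ⟨c, hc'⟩ := hconst
  have hcim : c.im = 0 := by
    have := him 0 (by simp)
    rw [hc' 0 (by simp)] at this
    exact this
  refine ⟨a, c.re, ?_⟩
  have hpoly : ∀ ζ ∈ ball (0:ℂ) 1, g ζ = a + (c.re : ℂ) * ζ + starRingEnd ℂ a * ζ ^ 2 := by
    intro ζ hζ
    have hcc : (c.re : ℂ) = c := by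
      apply Complex.ext <;> simp [hcim]
    rcases eq_or_ne ζ 0 with rfl | hζ0
    · simp [ha]
    · have hq : q ζ = ζ * h ζ := by
        rw [hne ζ hζ0]
        field_simp
      have : q ζ = c * ζ := by rw [hq, hc' ζ hζ]; ring
      have h3 : g ζ - a - starRingEnd ℂ a * ζ ^ 2 = c * ζ := this
      rw [hcc]
      linear_combination h3
  exact Set.EqOn.of_subset_closure hpoly hc
    (by fun_prop) ball_subset_closedBall (by rw [hclos])
end

section
/- Let g : ℂ → ℂ be holomorphic on the open unit disc Δ and continuous on the closed unit disc, suppose conj(ζ)·g(ζ) is a real number for every ζ with |ζ| = 1, and suppose g(1) = 0. Then there exists a ∈ ℂ such that g(ζ) = (1 − ζ)·(a − conj(a)·ζ) for every ζ in the closed unit disc. -/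
open Complex Metric

set_option maxHeartbeats 1000000 in
/-- If moreover `g(1) = 0`, then `g(ζ) = (1 − ζ)(a − conj(a)·ζ)`. -/
theorem stmt_12 (g : ℂ → ℂ)
    (hg : DifferentiableOn ℂ g (ball (0 : ℂ) 1))
    (hc : ContinuousOn g (closedBall (0 : ℂ) 1))
    (hb : ∀ ζ : ℂ, ‖ζ‖ = 1 → ∃ r : ℝ, starRingEnd ℂ ζ * g ζ = r)
    (h1 : g 1 = 0) :
    ∃ a : ℂ, ∀ ζ ∈ closedBall (0 : ℂ) 1,
      g ζ = (1 - ζ) * (a - starRingEnd ℂ a * ζ) := by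
  have hball0 : (0 : ℂ) ∈ ball (0 : ℂ) 1 := by simp
  have hopen : IsOpen (ball (0 : ℂ) 1) := isOpen_ball
  set h : ℂ → ℂ := dslope g 0 with hh
  -- g analytic at 0, hence dslope analytic at 0
  have hg0 : AnalyticAt ℂ g 0 := hg.analyticOnNhd hopen 0 hball0
  obtain ⟨p, hp⟩ := hg0
  have hda : AnalyticAt ℂ h 0 := ⟨_, hp.has_fpower_series_dslope_fslope⟩
  -- h differentiable on the open ball
  have hd : DifferentiableOn ℂ h (ball (0 : ℂ) 1) := by
    intro x hx
    rcases eq_or_ne x 0 with rfl | hx0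
    · exact hda.differentiableAt.differentiableWithinAt
    · exact (differentiableWithinAt_dslope_of_ne hx0).2 (hg x hx)
  -- h continuous on the closed ball
  have hcont : ContinuousOn h (closedBall (0 : ℂ) 1) := by
    intro x hx
    rcases eq_or_ne x 0 with rfl | hx0
    · exact hda.continuousAt.continuousWithinAt
    · exact (continuousWithinAt_dslope_of_ne hx0).2 (hc x hx)
  -- the key identity g ζ = g 0 + ζ * h ζ
  have hgz : ∀ ζ : ℂ, g ζ = g 0 + ζ * h ζ := by
    intro ζ
    have := sub_smul_dslope g 0 ζ
    rw [smul_eq_mul, sub_zero] at this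
    linear_combination -this
  -- the auxiliary function φ
  set φ : ℂ → ℂ := fun ζ => h ζ - starRingEnd ℂ (g 0) * ζ with hφ
  have hφd : DifferentiableOn ℂ φ (ball (0 : ℂ) 1) :=
    hd.sub ((differentiable_const _ |>.mul differentiable_id).differentiableOn)
  have hφc : ContinuousOn φ (closedBall (0 : ℂ) 1) :=
    hcont.sub (((continuous_const.mul continuous_id)).continuousOn)
  -- φ has real boundary values
  have him : ∀ ζ : ℂ, ‖ζ‖ = 1 → (φ ζ).im = 0 := by
    intro ζ hζ
    obtain ⟨r, hr⟩ := hb ζ hζ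
    have hζζ : starRingEnd ℂ ζ * ζ = 1 := by
      rw [mul_comm, Complex.mul_conj]
      norm_cast
      rw [Complex.normSq_eq_norm_sq, hζ]; norm_num
    have hhr : h ζ = (r : ℂ) - starRingEnd ℂ ζ * g 0 := by
      have h2 : starRingEnd ℂ ζ * g ζ
          = starRingEnd ℂ ζ * g 0 + h ζ := by
        rw [hgz ζ]; linear_combination h ζ * hζζ
      rw [hr] at h2
      linear_combination -h2
    have : φ ζ = (r : ℂ) - (starRingEnd ℂ (g 0) * ζ
        + starRingEnd ℂ (starRingEnd ℂ (g 0) * ζ)) := by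
      rw [hφ]; simp only [hhr, map_mul, RingHom.id_apply, Complex.conj_conj]
      ring
    rw [this]
    simp only [Complex.sub_im, Complex.add_im, Complex.ofReal_im, Complex.mul_im,
      Complex.conj_re, Complex.conj_im, Complex.mul_re]
    ring
  -- maximum principle: Im φ = 0 on the closed ball
  have himall : ∀ ζ ∈ closedBall (0 : ℂ) 1, (φ ζ).im = 0 := by
    have hcl : closure (ball (0 : ℂ) 1) = closedBall (0 : ℂ) 1 :=
      closure_ball 0 one_ne_zero
    have hfr : frontier (ball (0 : ℂ) 1) = sphere (0 : ℂ) 1 :=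
      frontier_ball 0 one_ne_zero
    have hbd := Metric.isBounded_ball (x := (0:ℂ)) (r := 1)
    intro ζ hζ
    have hζ' : ζ ∈ closure (ball (0 : ℂ) 1) := by rw [hcl]; exact hζ
    have key : ∀ ε : ℂ, (∀ z : ℂ, (ε * z).re = 0 → z.im = 0 → True) →
        True := fun _ _ => trivial
    have h1le : ‖Complex.exp (Complex.I * φ ζ)‖ ≤ 1 := by
      refine Complex.norm_le_of_forall_mem_frontier_norm_le
        (f := fun z => Complex.exp (Complex.I * φ z)) hbd ?_ ?_ hζ'
      · refine ⟨(hφd.const_mul _).cexp, ?_⟩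
        rw [hcl]
        exact (continuousOn_const.mul hφc).cexp
      · intro w hw
        rw [hfr, mem_sphere_zero_iff_norm] at hw
        have := him w hw
        rw [Complex.norm_exp]
        simp [Complex.mul_re, Complex.I_re, Complex.I_im, this]
    have h2le : ‖Complex.exp (-Complex.I * φ ζ)‖ ≤ 1 := by
      refine Complex.norm_le_of_forall_mem_frontier_norm_le
        (f := fun z => Complex.exp (-Complex.I * φ z)) hbd ?_ ?_ hζ'
      · refine ⟨(hφd.const_mul _).cexp, ?_⟩
        rw [hcl]
        exact (continuousOn_const.mul hφc).cexp
      · intro w hw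
        rw [hfr, mem_sphere_zero_iff_norm] at hw
        have := him w hw
        rw [Complex.norm_exp]
        simp [Complex.mul_re, Complex.I_re, Complex.I_im, this]
    rw [Complex.norm_exp] at h1le h2le
    have e1 : (Complex.I * φ ζ).re = -(φ ζ).im := by
      simp [Complex.mul_re]
    have e2 : (-Complex.I * φ ζ).re = (φ ζ).im := by
      simp [Complex.mul_re]
    rw [e1] at h1le
    rw [e2] at h2le
    have := Real.exp_le_one_iff.1 h1le
    have := Real.exp_le_one_iff.1 h2le
    linarith
  -- φ is constant on the ball by the open mapping theorem
  have hφa : AnalyticOnNhd ℂ φ (ball (0 : ℂ) 1) := hφd.analyticOnNhd hopen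
  have hpc : IsPreconnected (ball (0 : ℂ) 1) :=
    (convex_ball (0 : ℂ) 1).isPreconnected
  obtain ⟨w, hw⟩ | hopenmap := hφa.is_constant_or_isOpen hpc
  · -- constant case
    have hwim : w.im = 0 := by
      have := himall 0 (by simp)
      rw [hw 0 hball0] at this; exact this
    -- g ζ = g 0 + ζ * (w + conj (g 0) * ζ) on the ball
    have hEball : Set.EqOn g
        (fun ζ => g 0 + ζ * (w + starRingEnd ℂ (g 0) * ζ)) (ball (0 : ℂ) 1) := by
      intro ζ hζ
      have := hw ζ hζ
      rw [hφ] at this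
      have hhζ : h ζ = w + starRingEnd ℂ (g 0) * ζ := by
        simp only at this; linear_combination this
      simp only
      rw [hgz ζ, hhζ]
    -- extend to the closed ball by continuity
    have hEcb : Set.EqOn g
        (fun ζ => g 0 + ζ * (w + starRingEnd ℂ (g 0) * ζ))
        (closedBall (0 : ℂ) 1) := by
      refine hEball.of_subset_closure hc ?_ ball_subset_closedBall ?_
      · exact (continuous_const.add (continuous_id.mul
          (continuous_const.add (continuous_const.mul continuous_id)))).continuousOn
      · rw [closure_ball 0 one_ne_zero]
    -- evaluate at ζ = 1
    have hone : (1 : ℂ) ∈ closedBall (0 : ℂ) 1 := by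
      simp
    have hweq : w = -(g 0 + starRingEnd ℂ (g 0)) := by
      have := hEcb hone
      rw [h1] at this
      simp only at this
      linear_combination -this
    refine ⟨g 0, fun ζ hζ => ?_⟩
    have := hEcb hζ
    simp only at this
    rw [this, hweq]
    ring
  · -- open mapping case: contradiction since φ(ball) lies in the real line
    exfalso
    have hOpen : IsOpen (φ '' ball (0 : ℂ) 1) :=
      hopenmap _ subset_rfl hopen
    have hne : φ 0 ∈ φ '' ball (0 : ℂ) 1 := ⟨0, hball0, rfl⟩
    obtain ⟨ε, hε, hεsub⟩ := Metric.isOpen_iff.1 hOpen _ hne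
    have hmem : φ 0 + (ε / 2) * Complex.I ∈ Metric.ball (φ 0) ε := by
      rw [mem_ball, dist_eq_norm]
      simp only [add_sub_cancel_left]
      rw [norm_mul, Complex.norm_I, mul_one]
      rw [norm_div, Complex.norm_of_nonneg hε.le, Complex.norm_two]
      linarith
    obtain ⟨z, hz, hzeq⟩ := hεsub hmem
    have hz0 : (φ z).im = 0 := himall z (ball_subset_closedBall hz)
    rw [hzeq] at hz0
    have h00 : (φ 0).im = 0 := himall 0 (by simp)
    simp [Complex.add_im, h00, Complex.ofReal_im] at hz0
    linarith
end

section
/- Let f, g : ℂ → ℂ be holomorphic on the open unit disc Δ and continuous on the closed unit disc, and suppose f(ζ) = −ζ·conj(g(ζ)) for every ζ with |ζ| = 1. Then there exist a, b ∈ ℂ such that f(ζ) = a + b·ζ and g(ζ) = −conj(b) − conj(a)·ζ for every ζ in the closed unit disc; in particular both f and g are polynomials of degree at most 1. -/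
set_option maxHeartbeats 1000000

open Complex Metric MeasureTheory intervalIntegral

private lemma conj_intervalIntegral' (f : ℝ → ℂ) (a b : ℝ) :
    (starRingEnd ℂ) (∫ θ in a..b, f θ) = ∫ θ in a..b, (starRingEnd ℂ) (f θ) := by
  simp only [intervalIntegral, ← integral_conj, map_sub]

private lemma alg_id' (z w c : ℂ) (hz : z ≠ 0) (hzw : z - w ≠ 0) :
    (z * I) * ((z - w)⁻¹ * (-(z * c))) =
      ((z * I) * (-c) + w * (I * (-c))) + w * w * (-I * ((z - w)⁻¹ * c)) := by
  field_simp
  ring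

private lemma conj_pt' (z w gz : ℂ) (hz : z ≠ 0) (hz1 : (starRingEnd ℂ) z = z⁻¹)
    (hd : 1 - (starRingEnd ℂ) w * z ≠ 0) (hzw : z - w ≠ 0) :
    (starRingEnd ℂ) (-I * ((z - w)⁻¹ * (starRingEnd ℂ) gz)) =
      (z * I) * ((1 - (starRingEnd ℂ) w * z)⁻¹ * gz) := by
  have hd' : 1 - z * (starRingEnd ℂ) w ≠ 0 := by rwa [mul_comm] at hd
  rw [map_mul, map_mul, map_neg, Complex.conj_I, map_inv₀, Complex.conj_conj, map_sub, hz1]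
  field_simp

private lemma half_poly' (f g : ℂ → ℂ)
    (hf : DifferentiableOn ℂ f (ball (0 : ℂ) 1))
    (hfc : ContinuousOn f (closedBall (0 : ℂ) 1))
    (hg : DifferentiableOn ℂ g (ball (0 : ℂ) 1))
    (hgc : ContinuousOn g (closedBall (0 : ℂ) 1))
    (hb : ∀ ζ : ℂ, ‖ζ‖ = 1 → f ζ = -(ζ * starRingEnd ℂ (g ζ))) :
    ∃ a b : ℂ, ∀ w ∈ ball (0 : ℂ) 1, f w = a + b * w := by
  have hcm : ∀ θ : ℝ, circleMap 0 1 θ ∈ closedBall (0:ℂ) 1 := fun θ =>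
    circleMap_mem_closedBall 0 zero_le_one θ
  have hgcm : Continuous fun θ : ℝ => g (circleMap 0 1 θ) :=
    hgc.comp_continuous (continuous_circleMap 0 1) hcm
  have habs : ∀ θ : ℝ, ‖circleMap 0 1 θ‖ = 1 := fun θ => by
    simpa using norm_circleMap_zero 1 θ
  have hne0 : ∀ θ : ℝ, circleMap 0 1 θ ≠ 0 := fun θ => by
    intro h
    have := habs θ
    rw [h] at this
    simp at this
  set c : ℝ → ℂ := fun θ => starRingEnd ℂ (g (circleMap 0 1 θ)) with hc
  have hcc : Continuous c := Complex.continuous_conj.comp hgcm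
  refine ⟨(2 * Real.pi * I)⁻¹ * ∫ θ in (0:ℝ)..2*Real.pi, (circleMap 0 1 θ * I) * (-(c θ)),
          (2 * Real.pi * I)⁻¹ * ∫ θ in (0:ℝ)..2*Real.pi, I * (-(c θ)), ?_⟩
  intro w hw
  have hwlt : ‖w‖ < 1 := by
    simpa using mem_ball_zero_iff.mp hw
  have hzw : ∀ θ : ℝ, circleMap 0 1 θ - w ≠ 0 := fun θ =>
    sub_ne_zero.mpr (circleMap_ne_mem_ball hw θ)
  have hdcf : DiffContOnCl ℂ f (ball (0:ℂ) 1) := ⟨hf, by rwa [closure_ball 0 one_ne_zero]⟩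
  have h1 := hdcf.circleIntegral_sub_inv_smul hw
  rw [circleIntegral] at h1
  simp only [deriv_circleMap, smul_eq_mul] at h1
  have h2 : (∫ θ in (0:ℝ)..2*Real.pi,
        circleMap 0 1 θ * I * ((circleMap 0 1 θ - w)⁻¹ * f (circleMap 0 1 θ)))
      = ∫ θ in (0:ℝ)..2*Real.pi, (((circleMap 0 1 θ * I) * (-(c θ)) + w * (I * (-(c θ))))
         + w * w * (-I * ((circleMap 0 1 θ - w)⁻¹ * c θ))) := by
    refine intervalIntegral.integral_congr fun θ _ => ?_
    rw [hb _ (habs θ)]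
    exact alg_id' _ _ _ (hne0 θ) (hzw θ)
  have int1 : IntervalIntegrable (fun θ => (circleMap 0 1 θ * I) * (-(c θ)))
      volume 0 (2*Real.pi) :=
    (((continuous_circleMap 0 1).mul continuous_const).mul hcc.neg).intervalIntegrable _ _
  have int2 : IntervalIntegrable (fun θ => w * (I * (-(c θ)))) volume 0 (2*Real.pi) :=
    (continuous_const.mul (continuous_const.mul hcc.neg)).intervalIntegrable _ _
  have hinvc : Continuous fun θ => (circleMap 0 1 θ - w)⁻¹ :=
    ((continuous_circleMap 0 1).sub continuous_const).inv₀ hzw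
  have int3 : IntervalIntegrable (fun θ => w * w * (-I * ((circleMap 0 1 θ - w)⁻¹ * c θ)))
      volume 0 (2*Real.pi) :=
    (continuous_const.mul (continuous_const.mul (hinvc.mul hcc))).intervalIntegrable _ _
  rw [h2, intervalIntegral.integral_add (int1.add int2) int3,
    intervalIntegral.integral_add int1 int2] at h1
  -- the remainder integral vanishes
  have hJ : (∫ θ in (0:ℝ)..2*Real.pi, -I * ((circleMap 0 1 θ - w)⁻¹ * c θ)) = 0 := by
    have hdne : ∀ z : ℂ, z ∈ closedBall (0:ℂ) 1 → 1 - (starRingEnd ℂ) w * z ≠ 0 := by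
      intro z hz h0
      have h1' : (starRingEnd ℂ) w * z = 1 := by linear_combination -h0
      have : ‖(starRingEnd ℂ) w * z‖ < 1 := by
        rw [norm_mul, Complex.norm_conj]
        calc ‖w‖ * ‖z‖ ≤ ‖w‖ * 1 := by
              have : ‖z‖ ≤ 1 := by
                simpa using mem_closedBall_zero_iff.mp hz
              nlinarith [norm_nonneg w, norm_nonneg z]
          _ < 1 := by simpa using hwlt
      rw [h1'] at this
      simp at this
    have hzero : (∮ z in C(0,1), (1 - (starRingEnd ℂ) w * z)⁻¹ * g z) = 0 := by
      apply circleIntegral_eq_zero_of_differentiable_on_off_countable zero_le_one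
        Set.countable_empty
      · exact (ContinuousOn.inv₀
          (continuousOn_const.sub (continuousOn_const.mul continuousOn_id)) hdne).mul hgc
      · intro z hz
        refine DifferentiableAt.mul (DifferentiableAt.inv ?_ ?_) (hg.differentiableAt
          (isOpen_ball.mem_nhds hz.1))
        · exact (differentiableAt_const _).sub ((differentiableAt_const _).mul differentiableAt_id)
        · exact hdne z (ball_subset_closedBall hz.1)
    have hconj : (starRingEnd ℂ)
        (∫ θ in (0:ℝ)..2*Real.pi, -I * ((circleMap 0 1 θ - w)⁻¹ * c θ)) = 0 := by
      rw [conj_intervalIntegral']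
      have heq : (∫ θ in (0:ℝ)..2*Real.pi,
            (starRingEnd ℂ) (-I * ((circleMap 0 1 θ - w)⁻¹ * c θ)))
          = ∮ z in C(0,1), (1 - (starRingEnd ℂ) w * z)⁻¹ * g z := by
        rw [circleIntegral]
        simp only [deriv_circleMap, smul_eq_mul]
        refine intervalIntegral.integral_congr fun θ _ => ?_
        have hz1 : (starRingEnd ℂ) (circleMap 0 1 θ) = (circleMap 0 1 θ)⁻¹ := by
          rw [Complex.inv_def, Complex.normSq_eq_norm_sq, habs θ]
          simp
        exact conj_pt' _ _ _ (hne0 θ) hz1 (hdne _ (hcm θ)) (hzw θ)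
      rw [heq, hzero]
    have := congrArg (starRingEnd ℂ) hconj
    simpa using this
  have hC : (∫ θ in (0:ℝ)..2*Real.pi, w * w * (-I * ((circleMap 0 1 θ - w)⁻¹ * c θ))) = 0 := by
    rw [intervalIntegral.integral_const_mul, hJ, mul_zero]
  rw [hC, add_zero] at h1
  rw [intervalIntegral.integral_const_mul] at h1
  have h2pi : (2 * (Real.pi:ℂ) * I) ≠ 0 := by
    simp [Real.pi_ne_zero, Complex.I_ne_zero, Complex.ofReal_ne_zero]
  calc f w = (2 * (Real.pi:ℂ) * I)⁻¹ * ((2 * (Real.pi:ℂ) * I) * f w) := by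
        rw [inv_mul_cancel_left₀ h2pi]
    _ = _ := by rw [← h1]; ring

/-- The 2×2 coupled boundary system `f(ζ) = −ζ·conj(g(ζ))` on the circle has
only solutions which are polynomials of degree at most 1, of the indicated
form (all partial indices equal 1). -/
theorem stmt_13 (f g : ℂ → ℂ)
    (hf : DifferentiableOn ℂ f (ball (0 : ℂ) 1))
    (hfc : ContinuousOn f (closedBall (0 : ℂ) 1))
    (hg : DifferentiableOn ℂ g (ball (0 : ℂ) 1))
    (hgc : ContinuousOn g (closedBall (0 : ℂ) 1))
    (hb : ∀ ζ : ℂ, ‖ζ‖ = 1 → f ζ = -(ζ * starRingEnd ℂ (g ζ))) :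
    ∃ a b : ℂ, ∀ ζ ∈ closedBall (0 : ℂ) 1,
      f ζ = a + b * ζ ∧ g ζ = -starRingEnd ℂ b - starRingEnd ℂ a * ζ := by
  have hb' : ∀ ζ : ℂ, ‖ζ‖ = 1 → g ζ = -(ζ * starRingEnd ℂ (f ζ)) := by
    intro ζ hζ
    have h1 := hb ζ hζ
    have h2 : (starRingEnd ℂ) (f ζ) = -((starRingEnd ℂ) ζ * g ζ) := by
      rw [h1]; simp [map_mul]
    have hnz : ζ * (starRingEnd ℂ) ζ = 1 := by
      rw [Complex.mul_conj, Complex.normSq_eq_norm_sq, hζ]; simp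
    calc g ζ = (ζ * (starRingEnd ℂ) ζ) * g ζ := by rw [hnz, one_mul]
      _ = -(ζ * (starRingEnd ℂ) (f ζ)) := by rw [h2]; ring
  obtain ⟨a, b, hab⟩ := half_poly' f g hf hfc hg hgc hb
  obtain ⟨p, q, hpq⟩ := half_poly' g f hg hgc hf hfc hb'
  have hfall : Set.EqOn f (fun ζ => a + b * ζ) (closedBall 0 1) :=
    Set.EqOn.of_subset_closure (fun ζ hζ => hab ζ hζ) hfc
      (continuousOn_const.add (continuousOn_const.mul continuousOn_id))
      ball_subset_closedBall (by rw [closure_ball (0:ℂ) one_ne_zero])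
  have hgall : Set.EqOn g (fun ζ => p + q * ζ) (closedBall 0 1) :=
    Set.EqOn.of_subset_closure (fun ζ hζ => hpq ζ hζ) hgc
      (continuousOn_const.add (continuousOn_const.mul continuousOn_id))
      ball_subset_closedBall (by rw [closure_ball (0:ℂ) one_ne_zero])
  have m1 : (1:ℂ) ∈ closedBall (0:ℂ) 1 := by
    simp [mem_closedBall_zero_iff]
  have mm1 : (-1:ℂ) ∈ closedBall (0:ℂ) 1 := by
    simp [mem_closedBall_zero_iff]
  have e1 := hb 1 (by simp)
  have e2 := hb (-1) (by simp)
  rw [hfall m1, hgall m1] at e1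
  rw [hfall mm1, hgall mm1] at e2
  simp only [map_add, map_mul, map_one, map_neg, mul_one, one_mul, mul_neg, neg_neg,
    mul_neg_one, neg_mul] at e1 e2
  have ha : a = -(starRingEnd ℂ) q := by linear_combination (e1 + e2) / 2
  have hbb : b = -(starRingEnd ℂ) p := by linear_combination (e1 - e2) / 2
  refine ⟨a, b, fun ζ hζ => ⟨hfall hζ, ?_⟩⟩
  rw [hgall hζ, ha, hbb]
  simp only [map_neg, Complex.conj_conj, neg_neg]
  ring
end

section
/- Let n, d ≥ 1, let A₁,…,A_d be Hermitian n×n complex matrices, let c = (c₁,…,c_d) ∈ ℝᵈ, and set A = ∑_{j=1}^d c_j A_j. Consider the real vector subspace W of ℂⁿ × ℂᵈ × ℂⁿ × ℂᵈ given by W = {(v, i·s, −conj(A v), κ) : v ∈ ℂⁿ, s ∈ ℝᵈ, κ ∈ ℝᵈ}, where i·s = (i s₁, …, i s_d) and conj(Av) is the componentwise complex conjugate of Av ∈ ℂⁿ. Then W ∩ iW = {0} if and only if the matrix A is invertible. -/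
open Complex Matrix
open scoped Pointwise

/-- Linear-algebra content of Proposition 2.2 (Webster, Tumanov): the real
subspace `W = {(v, i·s, −conj(Av), κ) : v ∈ ℂⁿ, s, κ ∈ ℝᵈ}` of
`ℂⁿ × ℂᵈ × ℂⁿ × ℂᵈ` is totally real (`W ∩ iW = {0}`) if and only if
`A = ∑ cⱼAⱼ` is invertible. -/
theorem stmt_14 (n d : ℕ) (hn : 1 ≤ n) (hd : 1 ≤ d)
    (A' : Fin d → Matrix (Fin n) (Fin n) ℂ) (hA' : ∀ j, (A' j).IsHermitian)
    (c : Fin d → ℝ)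
    (A : Matrix (Fin n) (Fin n) ℂ) (hA : A = ∑ j, (c j : ℂ) • A' j)
    (W : Set ((Fin n → ℂ) × (Fin d → ℂ) × (Fin n → ℂ) × (Fin d → ℂ)))
    (hW : W = {p | ∃ (v : Fin n → ℂ) (s κ : Fin d → ℝ),
      p = (v, fun j => Complex.I * (s j : ℂ),
            fun i => -(starRingEnd ℂ (A.mulVec v i)),
            fun j => (κ j : ℂ))}) :
    W ∩ (Complex.I • W) = {0} ↔ IsUnit A := by
  subst hW
  have hker : (∀ v : Fin n → ℂ, A.mulVec v = 0 → v = 0) ↔ IsUnit A := by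
    rw [← Matrix.mulVec_injective_iff_isUnit]
    constructor
    · intro h x y hxy
      have h0 : A.mulVec (x - y) = 0 := by rw [Matrix.mulVec_sub, hxy, sub_self]
      exact sub_eq_zero.mp (h _ h0)
    · intro h v hv
      have := h (a₁ := v) (a₂ := 0) (by simpa using hv)
      simpa using this
  rw [← hker]
  constructor
  · -- totally real → trivial kernel
    intro h v hv
    have hv' : ∀ i, A.mulVec v i = 0 := fun i => congrFun hv i
    have hmem : ((v, (fun _ => (0:ℂ)), (fun _ => (0:ℂ)), (fun _ => (0:ℂ))) :
        (Fin n → ℂ) × (Fin d → ℂ) × (Fin n → ℂ) × (Fin d → ℂ)) ∈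
        ({p | ∃ (v : Fin n → ℂ) (s κ : Fin d → ℝ),
          p = (v, fun j => Complex.I * (s j : ℂ),
            fun i => -(starRingEnd ℂ (A.mulVec v i)),
            fun j => (κ j : ℂ))} ∩
          (Complex.I • {p | ∃ (v : Fin n → ℂ) (s κ : Fin d → ℝ),
          p = (v, fun j => Complex.I * (s j : ℂ),
            fun i => -(starRingEnd ℂ (A.mulVec v i)),
            fun j => (κ j : ℂ))})) := by
      constructor
      · exact ⟨v, 0, 0, by simp [Prod.ext_iff, funext_iff, hv']⟩
      · refine Set.mem_smul_set.mpr ⟨((-Complex.I) • v, (fun _ => (0:ℂ)),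
          (fun _ => (0:ℂ)), (fun _ => (0:ℂ))), ⟨(-Complex.I) • v, 0, 0, ?_⟩, ?_⟩
        · have : A.mulVec ((-Complex.I) • v) = (-Complex.I) • A.mulVec v := by
            rw [Matrix.mulVec_smul]
          simp [Prod.ext_iff, funext_iff, Matrix.mulVec_neg, Matrix.mulVec_smul, hv]
        · simp [Prod.smul_mk, Prod.ext_iff, funext_iff, smul_smul]
    rw [h] at hmem
    have := congrArg Prod.fst hmem
    simpa using this
  · -- trivial kernel → totally real
    intro h
    apply Set.eq_singleton_iff_unique_mem.mpr
    refine ⟨⟨⟨0, 0, 0, by simp [Prod.ext_iff, funext_iff]⟩, ?_⟩, ?_⟩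
    · exact Set.mem_smul_set.mpr ⟨0, ⟨0, 0, 0, by simp [Prod.ext_iff, funext_iff]⟩, by simp⟩
    · rintro p ⟨⟨v, s, κ, rfl⟩, hp2⟩
      obtain ⟨q, ⟨v', s', κ', rfl⟩, hq⟩ := Set.mem_smul_set.mp hp2
      simp only [Prod.smul_mk, Prod.mk.injEq] at hq
      obtain ⟨h1, h2, h3, h4⟩ := hq
      -- s = 0
      have hs : ∀ j, s j = 0 := by
        intro j
        have := congrFun h2 j
        simp only [Pi.smul_apply, smul_eq_mul] at this
        have := congrArg Complex.im this
        simpa using this.symm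
      -- κ = 0
      have hκ : ∀ j, κ j = 0 := by
        intro j
        have := congrFun h4 j
        simp only [Pi.smul_apply, smul_eq_mul] at this
        have := congrArg Complex.re this
        simpa using this.symm
      -- v' = 0 hence v = 0
      have hvv : A.mulVec v = Complex.I • A.mulVec v' := by
        rw [← h1, Matrix.mulVec_smul]
      have hAv' : A.mulVec v' = 0 := by
        funext i
        have e := congrFun h3 i
        simp only [hvv, Pi.smul_apply, smul_eq_mul] at e
        rw [_root_.map_mul, Complex.conj_I] at e
        have h2I : (2 * Complex.I) * (starRingEnd ℂ) (A.mulVec v' i) = 0 := by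
          linear_combination -e
        rcases mul_eq_zero.mp h2I with hc | hc
        · exact absurd hc (by simp [Complex.ext_iff])
        · simpa [Complex.ext_iff] using hc
      have hv' : v' = 0 := h _ hAv'
      have hv : v = 0 := by rw [← h1, hv']; simp
      have hAv : A.mulVec v = 0 := by rw [hv, Matrix.mulVec_zero]
      simp [Prod.ext_iff, funext_iff, hv, hs, hκ, hAv]
end
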